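/- Let p = 2d+1 and let c1 >= c2 be integers with 0 <= c2 <= c1 <= d-1. Then the number of pairs (a,b) of integers satisfying: 0 <= b <= d-a-1, c1-c2 <= a <= min(c1+c2, 2d-1-c1-c2), and a ≡ c1-c2 (mod 2), equals (c2+1)(d-c1). -/

import Mathlib

private lemma gauss_aux : ∀ (n C : ℕ), 2 * n ≤ C + 2 →
    ∑ k ∈ Finset.range n, (C - 2 * k) = n * (C + 1 - n) := by
  intro n
  induction n with
  | zero => intro C _; simp
  | succ n ih =>
    intro C h
    obtain ⟨m, rfl⟩ : ∃ m, C = m + 2 * n := ⟨C - 2 * n, by omega⟩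
    rw [Finset.sum_range_succ, ih _ (by omega)]
    have h1 : m + 2 * n + 1 - n = m + n + 1 := by omega
    have h2 : m + 2 * n - 2 * n = m := by omega
    have h3 : m + 2 * n + 1 - (n + 1) = m + n := by omega
    rw [h1, h2, h3]
    ring

/-- The number of balanced colorings `β(c₁,c₂)` of the genus-one lollipop tree with two
boundary colors `2c₁`, `2c₂` equals `(c₂+1)(d-c₁)`.  A coloring is a pair `(a,b)` with
`0 ≤ b ≤ d-a-1`, `c₁-c₂ ≤ a ≤ min (c₁+c₂) (2d-1-c₁-c₂)` and `a ≡ c₁-c₂ (mod 2)`. -/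
theorem balanced_count (d c1 c2 : ℕ) (hd : 2 ≤ d) (h21 : c2 ≤ c1) (h1d : c1 ≤ d - 1) :
    ((Finset.range d ×ˢ Finset.range d).filter (fun ab : ℕ × ℕ =>
        ab.1 + ab.2 + 1 ≤ d ∧
        c1 - c2 ≤ ab.1 ∧ ab.1 ≤ min (c1 + c2) (2 * d - 1 - c1 - c2) ∧
        ab.1 % 2 = (c1 - c2) % 2)).card = (c2 + 1) * (d - c1) := by
  set e := c1 - c2 with he
  set N := min (c2 + 1) (d - c1) with hN
  have key : ((Finset.range d ×ˢ Finset.range d).filter (fun ab : ℕ × ℕ =>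
        ab.1 + ab.2 + 1 ≤ d ∧
        c1 - c2 ≤ ab.1 ∧ ab.1 ≤ min (c1 + c2) (2 * d - 1 - c1 - c2) ∧
        ab.1 % 2 = (c1 - c2) % 2)).card
      = ((Finset.range N).sigma fun k => Finset.range (d - (e + 2 * k))).card := by
    apply Finset.card_nbij' (fun ab => ⟨(ab.1 - e) / 2, ab.2⟩)
      (fun kb => (e + 2 * kb.1, kb.2))
    · intro ab hab
      simp only [Finset.mem_coe, Finset.mem_filter, Finset.mem_product, Finset.mem_range] at hab
      simp only [Finset.mem_coe, Finset.mem_sigma, Finset.mem_range]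
      omega
    · intro kb hkb
      simp only [Finset.mem_coe, Finset.mem_sigma, Finset.mem_range] at hkb
      simp only [Finset.mem_coe, Finset.mem_filter, Finset.mem_product, Finset.mem_range]
      omega
    · intro ab hab
      simp only [Finset.mem_coe, Finset.mem_filter, Finset.mem_product, Finset.mem_range] at hab
      have : e + 2 * ((ab.1 - e) / 2) = ab.1 := by omega
      simp [this]
    · intro kb hkb
      simp only [Finset.mem_coe, Finset.mem_sigma, Finset.mem_range] at hkb
      have : (e + 2 * kb.1 - e) / 2 = kb.1 := by omega
      simp [this]
  rw [key, Finset.card_sigma]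
  simp only [Finset.card_range]
  have : ∀ k ∈ Finset.range N, d - (e + 2 * k) = (d - e) - 2 * k := fun k _ => by omega
  rw [Finset.sum_congr rfl this, gauss_aux N (d - e) (by omega)]
  have h1 : d - e + 1 - N = max (c2 + 1) (d - c1) := by omega
  rw [h1, hN]
  rcases Nat.le_total (c2 + 1) (d - c1) with h | h
  · rw [min_eq_left h, max_eq_right h]
  · rw [min_eq_right h, max_eq_left h, Nat.mul_comm]
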